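/- Let f : ℝ^ℓ × ℝ^m → ℝ^ℓ be C¹, Λ : ℝ → ℝ^m a C¹ parameter shift with lim_{s→−∞} Λ(s) = λ₋, and suppose X₋ is a fixed point of f(·,λ₋) with ρ(D_x f(X₋,λ₋)) < 1. Then for every sufficiently small ε > 0 there exists S > 0 such that for all r, N > 0 with rN > S, there is a unique sequence {x_n}_{n ≤ −N} with ‖x_n − X₋‖ ≤ ε for all n ≤ −N and x_{n+1} = f(x_n, Λ(rn)) for all n < −N. -/

import Mathlib

open Filter
open scoped ENNReal NNReal Matrix

section auxnorm

attribute [local instance] Matrix.linftyOpNormedAddCommGroup Matrix.linftyOpNormedRing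
  Matrix.linftyOpNormedAlgebra

lemma aux_norm_map {ℓ : ℕ} (N : Matrix (Fin ℓ) (Fin ℓ) ℝ) :
    ‖N.map Complex.ofReal‖ = ‖N‖ := by
  rw [Matrix.linfty_opNorm_def, Matrix.linfty_opNorm_def]
  congr 1
  refine Finset.sup_congr rfl fun i _ => Finset.sum_congr rfl fun j _ => ?_
  simp [Matrix.map_apply]

lemma aux_pow_lt (ℓ : ℕ) (A : (Fin ℓ → ℝ) →L[ℝ] (Fin ℓ → ℝ))
    (hspec : ∀ μ ∈ spectrum ℂ
        ((LinearMap.toMatrix' (A : (Fin ℓ → ℝ) →ₗ[ℝ] (Fin ℓ → ℝ))).map Complex.ofReal),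
      ‖μ‖ < 1) :
    ∃ k : ℕ, 0 < k ∧ ‖A ^ k‖ < 1 := by
  rcases Nat.eq_zero_or_pos ℓ with hl | hl
  · subst hl
    refine ⟨1, one_pos, ?_⟩
    have hA0 : A ^ 1 = 0 := ContinuousLinearMap.ext fun v => funext fun i => i.elim0
    rw [hA0, norm_zero]; norm_num
  · haveI : Nontrivial (Matrix (Fin ℓ) (Fin ℓ) ℂ) := by
      refine ⟨0, 1, fun h => ?_⟩
      have := congrFun (congrFun h ⟨0, hl⟩) ⟨0, hl⟩
      simp [Matrix.one_apply_eq] at this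
    set M := LinearMap.toMatrix' (A : (Fin ℓ → ℝ) →ₗ[ℝ] (Fin ℓ → ℝ)) with hM
    set Mc := M.map Complex.ofReal with hMc
    have hrad : spectralRadius ℂ Mc < 1 := by
      have h := spectrum.spectralRadius_lt_of_forall_lt (a := Mc) (r := 1)
        (fun z hz => by
          have := hspec z hz
          exact_mod_cast this)
      simpa using h
    have hgel := spectrum.pow_nnnorm_pow_one_div_tendsto_nhds_spectralRadius Mc
    obtain ⟨k, hklt, hk1⟩ := ((hgel.eventually_lt_const hrad).and (eventually_ge_atTop 1)).exists
    have hnk : ‖Mc ^ k‖₊ < 1 := by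
      by_contra hge
      push_neg at hge
      have h1 : (1 : ℝ≥0∞) ≤ (‖Mc ^ k‖₊ : ℝ≥0∞) ^ (1 / (k : ℝ)) :=
        ENNReal.one_le_rpow (by exact_mod_cast hge) (by positivity)
      exact absurd hklt (not_lt.mpr h1)
    have hMcpow : ∀ j : ℕ, Mc ^ j = (M ^ j).map Complex.ofReal := by
      intro j
      have := map_pow (Complex.ofRealHom.mapMatrix (m := Fin ℓ)) M j
      exact this.symm
    have hMv : ∀ v : Fin ℓ → ℝ, M *ᵥ v = A v := by
      intro v
      rw [hM, ← Matrix.toLin'_apply, Matrix.toLin'_toMatrix']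
      rfl
    have hiter : ∀ (j : ℕ) (v : Fin ℓ → ℝ), (M ^ j) *ᵥ v = (⇑A)^[j] v := by
      intro j
      induction j with
      | zero => intro v; simp
      | succ j ih =>
        intro v
        rw [pow_succ, ← Matrix.mulVec_mulVec, hMv, Function.iterate_succ_apply, ih]
    have hb : ∀ v : Fin ℓ → ℝ, ‖(A ^ k) v‖ ≤ ‖Mc ^ k‖ * ‖v‖ := by
      intro v
      have h1 : (A ^ k) v = (M ^ k) *ᵥ v := by
        rw [hiter k v, FunLike.coe_pow_eq_iterate]
      rw [h1]
      calc ‖(M ^ k) *ᵥ v‖ ≤ ‖M ^ k‖ * ‖v‖ := Matrix.linfty_opNorm_mulVec _ _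
        _ = ‖Mc ^ k‖ * ‖v‖ := by rw [hMcpow, aux_norm_map]
    have hle : ‖A ^ k‖ ≤ ‖Mc ^ k‖ := ContinuousLinearMap.opNorm_le_bound _ (norm_nonneg _) hb
    exact ⟨k, hk1, lt_of_le_of_lt hle (by exact_mod_cast hnk)⟩

end auxnorm

set_option maxHeartbeats 3200000 in
/-- Lemma epsilonNeigh: for every sufficiently small `ε > 0` there is
`S > 0` such that whenever `r * N > S`, there is a unique backward solution
`{x_n}_{n ≤ -N}` of `x_{n+1} = f(x_n, Λ(r n))` staying within `ε` of `X₋`. -/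
theorem stmt3 (ℓ m : ℕ)
    (f : (Fin ℓ → ℝ) × (Fin m → ℝ) → (Fin ℓ → ℝ)) (hf : ContDiff ℝ 1 f)
    (Λ : ℝ → (Fin m → ℝ)) (hΛ : ContDiff ℝ 1 Λ) (lamm : Fin m → ℝ)
    (hΛlim : Tendsto Λ atBot (nhds lamm))
    (Xm : Fin ℓ → ℝ) (hfix : f (Xm, lamm) = Xm)
    (hspec : ∀ μ ∈ spectrum ℂ
        ((LinearMap.toMatrix' ((fderiv ℝ (fun x => f (x, lamm)) Xm :
            (Fin ℓ → ℝ) →L[ℝ] (Fin ℓ → ℝ)) : (Fin ℓ → ℝ) →ₗ[ℝ] (Fin ℓ → ℝ))).map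
          Complex.ofReal), ‖μ‖ < 1) :
    ∃ ε₀ > (0:ℝ), ∀ ε : ℝ, 0 < ε → ε ≤ ε₀ →
      ∃ S > (0:ℝ), ∀ r : ℝ, 0 < r → ∀ N : ℕ, S < r * N →
        ∃! x : {n : ℤ // n ≤ -(N:ℤ)} → (Fin ℓ → ℝ),
          (∀ n : {n : ℤ // n ≤ -(N:ℤ)}, ‖x n - Xm‖ ≤ ε) ∧
          (∀ n : ℤ, ∀ h : n + 1 ≤ -(N:ℤ),
            x ⟨n + 1, h⟩ = f (x ⟨n, by omega⟩, Λ (r * n))) := by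
  classical
  obtain ⟨A, hAdef⟩ : ∃ A' : (Fin ℓ → ℝ) →L[ℝ] (Fin ℓ → ℝ),
      fderiv ℝ (fun x => f (x, lamm)) Xm = A' := ⟨_, rfl⟩
  rw [hAdef] at hspec
  obtain ⟨k, hk0, hAk⟩ := aux_pow_lt ℓ A hspec
  -- the adapted norm
  set θ : ℝ := max ‖A ^ k‖ 2⁻¹ with hθdef
  have hθ0 : 0 < θ := lt_of_lt_of_le (by norm_num) (le_max_right _ _)
  have hθ1 : θ < 1 := max_lt hAk (by norm_num)
  set t : ℝ := θ ^ ((k : ℝ)⁻¹) with htdef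
  have ht0 : 0 < t := Real.rpow_pos_of_pos hθ0 _
  have ht1 : t < 1 := Real.rpow_lt_one hθ0.le hθ1 (by positivity)
  have htk : θ = t ^ k := by
    rw [htdef, ← Real.rpow_natCast (θ ^ ((k:ℝ)⁻¹)) k, ← Real.rpow_mul hθ0.le,
      inv_mul_cancel₀ (by positivity : (k:ℝ) ≠ 0), Real.rpow_one]
  have hAtk : ‖A ^ k‖ ≤ t ^ k := htk ▸ le_max_left _ _
  set ad : (Fin ℓ → ℝ) → ℝ := fun v => ∑ i ∈ Finset.range k, (t ^ i)⁻¹ * ‖(A ^ i) v‖ with had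
  have ad_nonneg : ∀ v, 0 ≤ ad v := fun v => Finset.sum_nonneg fun i _ => by positivity
  have ad_zero : ad 0 = 0 := by simp [had]
  have norm_le_ad : ∀ v, ‖v‖ ≤ ad v := by
    intro v
    have h0 : (0:ℕ) ∈ Finset.range k := Finset.mem_range.mpr hk0
    calc ‖v‖ = (t ^ (0:ℕ))⁻¹ * ‖(A ^ (0:ℕ)) v‖ := by simp
    _ ≤ ad v := Finset.single_le_sum (f := fun i => (t ^ i)⁻¹ * ‖(A ^ i) v‖)
        (fun i _ => by positivity) h0
  set C : ℝ := 1 + ∑ i ∈ Finset.range k, (t ^ i)⁻¹ * ‖A ^ i‖ with hCdef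
  have hC1 : 1 ≤ C := le_add_of_nonneg_right (Finset.sum_nonneg fun i _ => by positivity)
  have hC0 : 0 < C := lt_of_lt_of_le one_pos hC1
  have ad_le : ∀ v, ad v ≤ C * ‖v‖ := by
    intro v
    calc ad v ≤ ∑ i ∈ Finset.range k, (t ^ i)⁻¹ * ‖A ^ i‖ * ‖v‖ :=
        Finset.sum_le_sum fun i _ => by
          rw [mul_assoc]
          exact mul_le_mul_of_nonneg_left ((A ^ i).le_opNorm v) (by positivity)
    _ = (∑ i ∈ Finset.range k, (t ^ i)⁻¹ * ‖A ^ i‖) * ‖v‖ := (Finset.sum_mul _ _ _).symm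
    _ ≤ C * ‖v‖ := by
        apply mul_le_mul_of_nonneg_right _ (norm_nonneg v)
        rw [hCdef]; linarith
  have ad_add : ∀ u v, ad (u + v) ≤ ad u + ad v := by
    intro u v
    calc ad (u + v) ≤ ∑ i ∈ Finset.range k,
        ((t ^ i)⁻¹ * ‖(A ^ i) u‖ + (t ^ i)⁻¹ * ‖(A ^ i) v‖) :=
        Finset.sum_le_sum fun i _ => by
          rw [map_add, ← mul_add]
          exact mul_le_mul_of_nonneg_left (norm_add_le _ _) (by positivity)
    _ = ad u + ad v := Finset.sum_add_distrib
  have ad_sub_le : ∀ u v w, ad (u - w) ≤ ad (u - v) + ad (v - w) := by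
    intro u v w
    have h : u - w = (u - v) + (v - w) := by abel
    rw [h]; exact ad_add _ _
  have ad_neg : ∀ v, ad (-v) = ad v := fun v => by simp [had]
  have hterm : ∀ (i : ℕ) (u : Fin ℓ → ℝ), (A ^ i) (A u) = (A ^ (i+1)) u := by
    intro i u
    rw [pow_succ, ContinuousLinearMap.mul_apply]
  have adA : ∀ v, ad (A v) ≤ t * ad v := by
    intro v
    set g : ℕ → ℝ := fun j => (t ^ j)⁻¹ * ‖(A ^ j) v‖ with hg
    have h1 : ad (A v) = t * ∑ i ∈ Finset.range k, g (i + 1) := by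
      rw [had, Finset.mul_sum]
      refine Finset.sum_congr rfl fun i _ => ?_
      rw [hterm i v, hg]
      have ht' : (t:ℝ) ≠ 0 := ht0.ne'
      field_simp [pow_succ]
      ring
    have hgk : g k ≤ g 0 := by
      have h2 : ‖(A ^ k) v‖ ≤ t ^ k * ‖v‖ :=
        ((A ^ k).le_opNorm v).trans (mul_le_mul_of_nonneg_right hAtk (norm_nonneg v))
      have h3 : (t ^ k)⁻¹ * ‖(A ^ k) v‖ ≤ ‖v‖ := by
        rw [inv_mul_le_iff₀ (by positivity)]
        nlinarith [h2]
      simpa [hg] using h3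
    have e1 : ∑ i ∈ Finset.range (k+1), g i = (∑ i ∈ Finset.range k, g (i+1)) + g 0 :=
      Finset.sum_range_succ' g k
    have e2 : ∑ i ∈ Finset.range (k+1), g i = (∑ i ∈ Finset.range k, g i) + g k :=
      Finset.sum_range_succ g k
    have h4 : ∑ i ∈ Finset.range k, g (i+1) ≤ ∑ i ∈ Finset.range k, g i := by linarith
    rw [h1]
    have : ad v = ∑ i ∈ Finset.range k, g i := rfl
    rw [this]
    exact mul_le_mul_of_nonneg_left h4 ht0.le
  -- derivative setup
  set J : (Fin ℓ → ℝ) →L[ℝ] ((Fin ℓ → ℝ) × (Fin m → ℝ)) :=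
    (ContinuousLinearMap.id ℝ (Fin ℓ → ℝ)).prod 0 with hJ
  have hpd0 : ∀ (z : Fin ℓ → ℝ) (w : Fin m → ℝ),
      HasFDerivAt (fun x => f (x, w)) ((fderiv ℝ f (z, w)).comp J) z := by
    intro z w
    have h1 : HasFDerivAt f (fderiv ℝ f (z, w)) (z, w) :=
      (hf.differentiable one_ne_zero (z, w)).hasFDerivAt
    have h2 : HasFDerivAt (fun x : Fin ℓ → ℝ => (x, w)) J z :=
      HasFDerivAt.prodMk (hasFDerivAt_id z) (hasFDerivAt_const w z)
    exact h1.comp z h2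
  obtain ⟨G, hGdef⟩ : ∃ G' : ((Fin ℓ → ℝ) × (Fin m → ℝ)) → ((Fin ℓ → ℝ) →L[ℝ] (Fin ℓ → ℝ)),
      G' = fun p => (fderiv ℝ f p).comp J := ⟨_, rfl⟩
  have hpd : ∀ (z : Fin ℓ → ℝ) (w : Fin m → ℝ),
      HasFDerivAt (fun x => f (x, w)) (G (z, w)) z := by
    intro z w
    rw [hGdef]
    exact hpd0 z w
  have hGA : G (Xm, lamm) = A := by
    rw [hGdef]
    rw [show ((fun p : (Fin ℓ → ℝ) × (Fin m → ℝ) => (fderiv ℝ f p).comp J) (Xm, lamm))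
      = (fderiv ℝ f (Xm, lamm)).comp J from rfl, ← (hpd0 Xm lamm).fderiv]
    exact hAdef
  have hGcont : Continuous G := by
    rw [hGdef]
    exact (hf.continuous_fderiv one_ne_zero).clm_comp continuous_const
  set e : ℝ := (1 - t) / (2 * C) with hedef
  have he : 0 < e := div_pos (by linarith) (by positivity)
  set t'' : ℝ := (1 + t) / 2 with ht''def
  have ht''1 : t'' < 1 := by rw [ht''def]; linarith
  have ht''0 : 0 < t'' := by rw [ht''def]; linarith
  have htt'' : t + e * C = t'' := by
    rw [hedef, ht''def]
    field_simp
    ring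
  obtain ⟨δ, hδ0, hδ⟩ := Metric.continuousAt_iff.mp hGcont.continuousAt e he
  set R : ℝ := δ / 2 with hRdef
  set η : ℝ := δ / 2 with hηdef
  have hR0 : 0 < R := by positivity
  have hη0 : 0 < η := by positivity
  have hGbound : ∀ (z : Fin ℓ → ℝ) (w : Fin m → ℝ), ‖z - Xm‖ ≤ R → ‖w - lamm‖ ≤ η →
      ‖G (z, w) - A‖ ≤ e := by
    intro z w h1 h2
    have hd : dist (z, w) (Xm, lamm) < δ := by
      rw [Prod.dist_eq]
      apply max_lt
      · rw [dist_eq_norm]; rw [hRdef] at h1; linarith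
      · rw [dist_eq_norm]; rw [hηdef] at h2; linarith
    have := hδ hd
    rw [hGA, dist_eq_norm] at this
    exact this.le
  -- key contraction estimate
  have hkey : ∀ (w : Fin m → ℝ), ‖w - lamm‖ ≤ η → ∀ (y y' : Fin ℓ → ℝ),
      ‖y - Xm‖ ≤ R → ‖y' - Xm‖ ≤ R →
      ad (f (y, w) - f (y', w)) ≤ t'' * ad (y - y') := by
    intro w hw y y' hy hy'
    have hys : y ∈ Metric.closedBall Xm R := by
      rw [Metric.mem_closedBall, dist_eq_norm]; exact hy
    have hy's : y' ∈ Metric.closedBall Xm R := by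
      rw [Metric.mem_closedBall, dist_eq_norm]; exact hy'
    have hi : ∀ i : ℕ,
        ‖(A ^ i) (f (y, w)) - (A ^ i) (f (y', w)) - (A ^ (i+1)) (y - y')‖ ≤
          ‖A ^ i‖ * e * ‖y - y'‖ := by
      intro i
      have hder : ∀ z ∈ Metric.closedBall Xm R,
          HasFDerivWithinAt (fun z => (A ^ i) (f (z, w))) ((A ^ i).comp (G (z, w)))
            (Metric.closedBall Xm R) z := fun z _ =>
        ((A ^ i).hasFDerivAt.comp z (hpd z w)).hasFDerivWithinAt
      have hbd : ∀ z ∈ Metric.closedBall Xm R,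
          ‖(A ^ i).comp (G (z, w)) - (A ^ (i+1))‖ ≤ ‖A ^ i‖ * e := by
        intro z hz
        have h1 : (A ^ i).comp (G (z, w)) - A ^ (i+1) = (A ^ i).comp (G (z, w) - A) := by
          rw [ContinuousLinearMap.comp_sub, pow_succ]
          rfl
        rw [h1]
        calc ‖(A ^ i).comp (G (z, w) - A)‖ ≤ ‖A ^ i‖ * ‖G (z, w) - A‖ :=
            ContinuousLinearMap.opNorm_comp_le _ _
        _ ≤ ‖A ^ i‖ * e := by
            apply mul_le_mul_of_nonneg_left _ (norm_nonneg _)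
            apply hGbound z w _ hw
            rw [Metric.mem_closedBall, dist_eq_norm] at hz
            exact hz
      exact Convex.norm_image_sub_le_of_norm_hasFDerivWithin_le' (𝕜 := ℝ)
        (f := fun z => (A ^ i) (f (z, w))) (f' := fun z => (A ^ i).comp (G (z, w)))
        (φ := A ^ (i+1)) (C := ‖A ^ i‖ * e) (s := Metric.closedBall Xm R)
        hder hbd (convex_closedBall Xm R) hy's hys
    have hi' : ∀ i : ℕ, ‖(A ^ i) (f (y, w) - f (y', w))‖ ≤
        ‖(A ^ (i+1)) (y - y')‖ + ‖A ^ i‖ * e * ‖y - y'‖ := by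
      intro i
      have h2 := hi i
      have h3 : (A ^ i) (f (y, w) - f (y', w)) =
          ((A ^ i) (f (y, w)) - (A ^ i) (f (y', w)) - (A ^ (i+1)) (y - y'))
            + (A ^ (i+1)) (y - y') := by
        rw [map_sub]; abel
      rw [h3]
      calc ‖_ + (A ^ (i+1)) (y - y')‖ ≤ _ + ‖(A ^ (i+1)) (y - y')‖ := norm_add_le _ _
      _ ≤ ‖(A ^ (i+1)) (y - y')‖ + ‖A ^ i‖ * e * ‖y - y'‖ := by linarith
    calc ad (f (y, w) - f (y', w))
        ≤ ∑ i ∈ Finset.range k, ((t ^ i)⁻¹ * ‖(A ^ (i+1)) (y - y')‖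
            + ((t ^ i)⁻¹ * ‖A ^ i‖) * (e * ‖y - y'‖)) := by
          rw [had]
          refine Finset.sum_le_sum fun i _ => ?_
          have h4 := hi' i
          have h5 : (t ^ i)⁻¹ * ‖(A ^ i) (f (y, w) - f (y', w))‖ ≤
              (t ^ i)⁻¹ * (‖(A ^ (i+1)) (y - y')‖ + ‖A ^ i‖ * e * ‖y - y'‖) :=
            mul_le_mul_of_nonneg_left h4 (by positivity)
          calc (t ^ i)⁻¹ * ‖(A ^ i) (f (y, w) - f (y', w))‖ ≤ _ := h5
          _ = (t ^ i)⁻¹ * ‖(A ^ (i+1)) (y - y')‖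
              + ((t ^ i)⁻¹ * ‖A ^ i‖) * (e * ‖y - y'‖) := by ring
    _ = (∑ i ∈ Finset.range k, (t ^ i)⁻¹ * ‖(A ^ (i+1)) (y - y')‖)
          + (∑ i ∈ Finset.range k, (t ^ i)⁻¹ * ‖A ^ i‖) * (e * ‖y - y'‖) := by
        rw [Finset.sum_add_distrib, Finset.sum_mul]
    _ ≤ ad (A (y - y')) + C * (e * ‖y - y'‖) := by
        have h6 : ad (A (y - y')) =
            ∑ i ∈ Finset.range k, (t ^ i)⁻¹ * ‖(A ^ (i+1)) (y - y')‖ := by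
          rw [had]
          exact Finset.sum_congr rfl fun i _ => by rw [hterm]
        rw [h6]
        have h7 : (∑ i ∈ Finset.range k, (t ^ i)⁻¹ * ‖A ^ i‖) ≤ C := by
          rw [hCdef]; linarith
        have h8 : (0:ℝ) ≤ e * ‖y - y'‖ := by positivity
        exact add_le_add le_rfl (mul_le_mul_of_nonneg_right h7 h8)
    _ ≤ t * ad (y - y') + C * (e * ad (y - y')) := by
        have h9 := adA (y - y')
        have h10 := norm_le_ad (y - y')
        exact add_le_add h9 (mul_le_mul_of_nonneg_left
          (mul_le_mul_of_nonneg_left h10 he.le) hC0.le)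
    _ = (t + e * C) * ad (y - y') := by ring
    _ = t'' * ad (y - y') := by rw [htt'']
  -- choose ε₀
  refine ⟨R, hR0, ?_⟩
  intro ε hε0 hεR
  set δε : ℝ := (1 - t'') * ε with hδεdef
  have hδε0 : 0 < δε := by
    rw [hδεdef]; have := ht''1; nlinarith
  -- choose S
  have hftend : Tendsto (fun s => f (Xm, Λ s)) atBot (nhds Xm) := by
    have h1 : Tendsto (fun s => (Xm, Λ s)) atBot (nhds (Xm, lamm)) :=
      tendsto_const_nhds.prodMk_nhds hΛlim
    have h2 := (hf.continuous.tendsto (Xm, lamm)).comp h1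
    rwa [hfix] at h2
  have hev1 : ∀ᶠ s in atBot, dist (f (Xm, Λ s)) Xm < δε / C :=
    Metric.tendsto_nhds.mp hftend _ (by positivity)
  have hev2 : ∀ᶠ s in atBot, dist (Λ s) lamm < η := Metric.tendsto_nhds.mp hΛlim _ hη0
  obtain ⟨s₀, hs₀⟩ := eventually_atBot.mp (hev1.and hev2)
  refine ⟨max 1 (-s₀), lt_of_lt_of_le one_pos (le_max_left _ _), ?_⟩
  intro r hr N hS
  have hz : ∀ z : ℤ, z ≤ -(N:ℤ) → (r * (z:ℝ)) ≤ s₀ := by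
    intro z hzle
    have h1 : (z:ℝ) ≤ -(N:ℝ) := by exact_mod_cast hzle
    have h2 : r * (z:ℝ) ≤ r * (-(N:ℝ)) := by nlinarith
    have h3 : -s₀ ≤ max 1 (-s₀) := le_max_right _ _
    nlinarith
  have hprop : ∀ z : ℤ, z ≤ -(N:ℤ) →
      ‖Λ (r * (z:ℝ)) - lamm‖ ≤ η ∧ ad (f (Xm, Λ (r * (z:ℝ))) - Xm) ≤ δε := by
    intro z hzle
    obtain ⟨h1, h2⟩ := hs₀ _ (hz z hzle)
    rw [dist_eq_norm] at h1 h2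
    refine ⟨h2.le, ?_⟩
    calc ad (f (Xm, Λ (r * (z:ℝ))) - Xm) ≤ C * ‖f (Xm, Λ (r * (z:ℝ))) - Xm‖ := ad_le _
    _ ≤ C * (δε / C) := mul_le_mul_of_nonneg_left h1.le hC0.le
    _ = δε := by field_simp
  -- the iteration
  set prev : {n : ℤ // n ≤ -(N:ℤ)} → {n : ℤ // n ≤ -(N:ℤ)} :=
    fun n => ⟨n.1 - 1, by have := n.2; omega⟩ with hprev
  set T : ({n : ℤ // n ≤ -(N:ℤ)} → (Fin ℓ → ℝ)) → ({n : ℤ // n ≤ -(N:ℤ)} → (Fin ℓ → ℝ)) :=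
    fun x n => f (x (prev n), Λ (r * ((n.1 - 1 : ℤ) : ℝ))) with hT
  set sq : ℕ → ({n : ℤ // n ≤ -(N:ℤ)} → (Fin ℓ → ℝ)) := fun j => T^[j] (fun _ => Xm) with hsq
  have hsq0 : ∀ n, sq 0 n = Xm := fun n => rfl
  have hsq_succ : ∀ j n, sq (j+1) n = f (sq j (prev n), Λ (r * ((n.1 - 1 : ℤ) : ℝ))) := by
    intro j n
    rw [hsq]
    simp only [Function.iterate_succ_apply']
    rfl
  have hfrac : ∀ j : ℕ, (1 - t'' ^ j) / (1 - t'') * δε ≤ ε := by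
    intro j
    have h1 : (0:ℝ) ≤ t'' ^ j := by positivity
    have h0 : (1:ℝ) - t'' ≠ 0 := by linarith
    have h2 : (1 - t'' ^ j) / (1 - t'') * δε = (1 - t'' ^ j) * ε := by
      rw [hδεdef]
      field_simp
      try ring
    rw [h2]; nlinarith
  have hQ : ∀ j : ℕ, (∀ n, ad (sq j n - Xm) ≤ (1 - t'' ^ j) / (1 - t'') * δε) ∧
      (∀ n, ad (sq (j+1) n - sq j n) ≤ δε * t'' ^ j) := by
    intro j
    induction j with
    | zero =>
      constructor
      · intro n
        rw [hsq0, sub_self, ad_zero]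
        simp
      · intro n
        rw [hsq_succ 0 n, hsq0, hsq0]
        have := (hprop (n.1 - 1) (by have := n.2; omega)).2
        simpa using this
    | succ j ih =>
      obtain ⟨ih1, ih2⟩ := ih
      have new1 : ∀ n, ad (sq (j+1) n - Xm) ≤ (1 - t'' ^ (j+1)) / (1 - t'') * δε := by
        intro n
        calc ad (sq (j+1) n - Xm) ≤ ad (sq (j+1) n - sq j n) + ad (sq j n - Xm) :=
            ad_sub_le _ _ _
        _ ≤ δε * t'' ^ j + (1 - t'' ^ j) / (1 - t'') * δε := add_le_add (ih2 n) (ih1 n)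
        _ = (1 - t'' ^ (j+1)) / (1 - t'') * δε := by
            have h1 : (1:ℝ) - t'' ≠ 0 := by linarith
            field_simp
            ring
      refine ⟨new1, ?_⟩
      intro n
      rw [hsq_succ (j+1) n, hsq_succ j n]
      have hb1 : ‖sq (j+1) (prev n) - Xm‖ ≤ R :=
        le_trans (norm_le_ad _) (le_trans (new1 _) (le_trans (hfrac _) hεR))
      have hb2 : ‖sq j (prev n) - Xm‖ ≤ R :=
        le_trans (norm_le_ad _) (le_trans (ih1 _) (le_trans (hfrac _) hεR))
      have hwb := (hprop (n.1 - 1) (by have := n.2; omega)).1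
      calc ad (f (sq (j+1) (prev n), Λ (r * ((n.1 - 1 : ℤ) : ℝ)))
            - f (sq j (prev n), Λ (r * ((n.1 - 1 : ℤ) : ℝ))))
          ≤ t'' * ad (sq (j+1) (prev n) - sq j (prev n)) := hkey _ hwb _ _ hb1 hb2
      _ ≤ t'' * (δε * t'' ^ j) := mul_le_mul_of_nonneg_left (ih2 _) ht''0.le
      _ = δε * t'' ^ (j+1) := by ring
  -- limits
  have hcau : ∀ n, CauchySeq (fun j => sq j n) := by
    intro n
    apply cauchySeq_of_le_geometric t'' δε ht''1
    intro j
    rw [dist_eq_norm, norm_sub_rev]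
    exact le_trans (norm_le_ad _) ((hQ j).2 n)
  choose x hx using fun n => cauchySeq_tendsto_of_complete (hcau n)
  have hxnorm : ∀ n, ‖x n - Xm‖ ≤ ε := by
    intro n
    have hj : ∀ j, ‖sq j n - Xm‖ ≤ ε := fun j =>
      le_trans (norm_le_ad _) (le_trans ((hQ j).1 n) (hfrac j))
    have hlim : Tendsto (fun j => ‖sq j n - Xm‖) atTop (nhds ‖x n - Xm‖) :=
      ((hx n).sub tendsto_const_nhds).norm
    exact le_of_tendsto hlim (Eventually.of_forall hj)
  have hxrec : ∀ (n : ℤ) (h : n + 1 ≤ -(N:ℤ)),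
      x ⟨n + 1, h⟩ = f (x ⟨n, by omega⟩, Λ (r * n)) := by
    intro n h
    have hp : prev ⟨n + 1, h⟩ = ⟨n, by omega⟩ := Subtype.ext (by simp [hprev])
    have heq : ∀ j, sq (j+1) ⟨n + 1, h⟩ = f (sq j ⟨n, by omega⟩, Λ (r * (n:ℝ))) := by
      intro j
      rw [hsq_succ, hp]
      norm_num
    have h1 : Tendsto (fun j => sq (j+1) ⟨n + 1, h⟩) atTop (nhds (x ⟨n + 1, h⟩)) :=
      (hx _).comp (tendsto_add_atTop_nat 1)
    have h2 : Tendsto (fun j => f (sq j ⟨n, by omega⟩, Λ (r * (n:ℝ)))) atTop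
        (nhds (f (x ⟨n, by omega⟩, Λ (r * (n:ℝ))))) :=
      (hf.continuous.tendsto _).comp ((hx _).prodMk_nhds tendsto_const_nhds)
    have h1' : Tendsto (fun j => f (sq j ⟨n, by omega⟩, Λ (r * (n:ℝ)))) atTop
        (nhds (x ⟨n + 1, h⟩)) := by
      rw [show (fun j => f (sq j ⟨n, by omega⟩, Λ (r * (n:ℝ))))
          = (fun j => sq (j+1) ⟨n + 1, h⟩) from funext fun j => (heq j).symm]
      exact h1
    exact tendsto_nhds_unique h1' h2
  refine ⟨x, ⟨hxnorm, hxrec⟩, ?_⟩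
  rintro y ⟨hy1, hy2⟩
  have hrecn : ∀ (u : {n : ℤ // n ≤ -(N:ℤ)} → (Fin ℓ → ℝ)),
      (∀ (n : ℤ) (h : n + 1 ≤ -(N:ℤ)), u ⟨n + 1, h⟩ = f (u ⟨n, by omega⟩, Λ (r * n))) →
      ∀ n : {n : ℤ // n ≤ -(N:ℤ)}, u n = f (u (prev n), Λ (r * ((n.1 - 1 : ℤ) : ℝ))) := by
    intro u hu n
    obtain ⟨nv, hnle⟩ := n
    have pf : (nv - 1) + 1 ≤ -(N:ℤ) := by omega
    have h3 := hu (nv - 1) pf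
    have h4 : (⟨nv - 1 + 1, pf⟩ : {n : ℤ // n ≤ -(N:ℤ)}) = ⟨nv, hnle⟩ :=
      Subtype.ext (by ring)
    rw [h4] at h3
    convert h3 using 3
  have huniq : ∀ (j : ℕ) (n : {n : ℤ // n ≤ -(N:ℤ)}),
      ad (y n - x n) ≤ (2 * C * ε) * t'' ^ j := by
    intro j
    induction j with
    | zero =>
      intro n
      have h1 : ad (y n - Xm) ≤ C * ε :=
        le_trans (ad_le _) (mul_le_mul_of_nonneg_left (hy1 n) hC0.le)
      have h2 : ad (Xm - x n) ≤ C * ε := by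
        have : Xm - x n = -(x n - Xm) := by abel
        rw [this, ad_neg]
        exact le_trans (ad_le _) (mul_le_mul_of_nonneg_left (hxnorm n) hC0.le)
      calc ad (y n - x n) ≤ ad (y n - Xm) + ad (Xm - x n) := ad_sub_le _ _ _
      _ ≤ 2 * C * ε := by linarith
      _ = (2 * C * ε) * t'' ^ 0 := by ring
    | succ j ih =>
      intro n
      rw [hrecn y hy2 n, hrecn x hxrec n]
      have hwb := (hprop (n.1 - 1) (by have := n.2; omega)).1
      have hb1 : ‖y (prev n) - Xm‖ ≤ R := le_trans (hy1 _) hεR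
      have hb2 : ‖x (prev n) - Xm‖ ≤ R := le_trans (hxnorm _) hεR
      calc ad (f (y (prev n), Λ (r * ((n.1 - 1 : ℤ) : ℝ)))
            - f (x (prev n), Λ (r * ((n.1 - 1 : ℤ) : ℝ))))
          ≤ t'' * ad (y (prev n) - x (prev n)) := hkey _ hwb _ _ hb1 hb2
      _ ≤ t'' * ((2 * C * ε) * t'' ^ j) := mul_le_mul_of_nonneg_left (ih _) ht''0.le
      _ = (2 * C * ε) * t'' ^ (j+1) := by ring
  funext n
  have hlim0 : Tendsto (fun j => (2 * C * ε) * t'' ^ j) atTop (nhds 0) := by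
    have := (tendsto_pow_atTop_nhds_zero_of_lt_one ht''0.le ht''1).const_mul (2 * C * ε)
    simpa using this
  have hle0 : ‖y n - x n‖ ≤ 0 :=
    ge_of_tendsto hlim0 (Eventually.of_forall fun j =>
      le_trans (norm_le_ad _) (huniq j n))
  have : y n - x n = 0 := norm_eq_zero.mp (le_antisymm hle0 (norm_nonneg _))
  exact sub_eq_zero.mp this
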